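/- Let U : C* → C be a reasonable expansion with unique restrictions which has the expansion property, where all morphisms of C are mono and C* is directed. Then for every object A of C: t_C(A) = Σ_{𝒜 ∈ U⁻¹(A)} t_{C*}(𝒜). In particular, t_C(A) is finite if and only if U⁻¹(A) is finite and t_{C*}(𝒜) is finite for every 𝒜 ∈ U⁻¹(A). -/

import Mathlib

open CategoryTheory

universe v u v' u'

def RamseyArrow (C : Type u) [Category.{v} C] (A B Z : C) (k t : ℕ) : Prop :=
  ∀ χ : (A ⟶ Z) → Fin k, ∃ w : B ⟶ Z,
    (Set.range fun f : A ⟶ B => χ (f ≫ w)).ncard ≤ t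

noncomputable def ramseyDeg (C : Type u) [Category.{v} C] (A : C) : ℕ∞ :=
  sInf {n : ℕ∞ | ∃ m : ℕ, n = (m : ℕ∞) ∧ 1 ≤ m ∧
    ∀ k : ℕ, 2 ≤ k → ∀ B : C, ∃ Z : C, RamseyArrow C A B Z k m}

variable {C : Type u} [Category.{v} C] {D : Type u'} [Category.{v'} D]

def InHom (U : D ⥤ C) {A : C} (X Y : D) (h : U.obj X = A) (e : A ⟶ U.obj Y) : Prop :=
  ∃ f : X ⟶ Y, U.map f = eqToHom h ≫ e

def ObjSurjective (U : D ⥤ C) : Prop := ∀ A : C, ∃ X : D, U.obj X = A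

def HomInjective (U : D ⥤ C) : Prop :=
  ∀ (X Y : D) (f g : X ⟶ Y), U.map f = U.map g → f = g

def HasUniqueRestrictions (U : D ⥤ C) : Prop :=
  ∀ (Y : D) (A : C) (e : A ⟶ U.obj Y),
    ∃! X : {Z : D // U.obj Z = A}, InHom U X.1 Y X.2 e

def Reasonable (U : D ⥤ C) : Prop :=
  ∀ (A B : C) (e : A ⟶ B) (X : D) (h : U.obj X = A),
    ∃ (Y : D) (h' : U.obj Y = B) (f : X ⟶ Y),
      U.map f = eqToHom h ≫ e ≫ eqToHom h'.symm

def ExpansionProperty (U : D ⥤ C) : Prop :=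
  ∀ A : C, ∃ B : C, ∀ X Y : D, U.obj X = A → U.obj Y = B → Nonempty (X ⟶ Y)

namespace Stmt19Aux
set_option linter.unusedSectionVars false
variable {C : Type u} [Category.{v} C] {D : Type u'} [Category.{v'} D]


/-- ℕ∞ tsum is the sup of finite sums. -/
lemma enat_tsum_eq_iSup {ι : Type*} (f : ι → ℕ∞) :
    ∑' i, f i = ⨆ s : Finset ι, ∑ i ∈ s, f i :=
  (hasSum_of_isLUB _
    ((isLUB_iSup : IsLUB (Set.range fun s : Finset ι => ∑ i ∈ s, f i) _))).tsum_eq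

lemma enat_eq_top (x : ℕ∞) (h : ∀ n : ℕ, (n : ℕ∞) ≤ x) : x = ⊤ := by
  cases x with
  | top => rfl
  | coe m => exact absurd (h (m + 1)) (by exact_mod_cast by omega)

lemma enat_tsum_top {ι : Type*} [Infinite ι] (f : ι → ℕ∞) (hf : ∀ i, 1 ≤ f i) :
    ∑' i, f i = ⊤ := by
  rw [enat_tsum_eq_iSup]
  refine enat_eq_top _ fun n => ?_
  obtain ⟨s, hs⟩ := Infinite.exists_subset_card_eq ι n
  refine le_trans ?_ (le_iSup _ s)
  calc (n : ℕ∞) = ∑ _i ∈ s, 1 := by simp [hs]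
    _ ≤ ∑ i ∈ s, f i := Finset.sum_le_sum fun i _ => hf i

def RSet (C : Type u) [Category.{v} C] (A : C) : Set ℕ :=
  {m | 1 ≤ m ∧ ∀ k : ℕ, 2 ≤ k → ∀ B : C, ∃ Z : C, RamseyArrow C A B Z k m}


lemma ramseyDeg_def (A : C) :
    ramseyDeg C A = sInf ((fun m : ℕ => (m : ℕ∞)) '' RSet C A) := by
  unfold ramseyDeg RSet
  congr 1
  ext n
  constructor
  · rintro ⟨m, rfl, h1, h2⟩; exact ⟨m, ⟨h1, h2⟩, rfl⟩
  · rintro ⟨m, ⟨h1, h2⟩, rfl⟩; exact ⟨m, rfl, h1, h2⟩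

lemma one_le_ramseyDeg (A : C) : 1 ≤ ramseyDeg C A := by
  rw [ramseyDeg_def]
  refine le_sInf ?_
  rintro n ⟨m, hm, rfl⟩
  show (1 : ℕ∞) ≤ (m : ℕ∞)
  exact_mod_cast hm.1

lemma ramseyDeg_le {A : C} {m : ℕ} (h : m ∈ RSet C A) : ramseyDeg C A ≤ m := by
  rw [ramseyDeg_def]; exact sInf_le ⟨m, h, rfl⟩

lemma ramseyDeg_attained {A : C} (h : ramseyDeg C A ≠ ⊤) :
    ∃ m : ℕ, ramseyDeg C A = m ∧ m ∈ RSet C A := by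
  have hne : (RSet C A).Nonempty := by
    by_contra hcon
    rw [Set.not_nonempty_iff_eq_empty] at hcon
    rw [ramseyDeg_def, hcon] at h
    simp at h
  refine ⟨sInf (RSet C A), ?_, Nat.sInf_mem hne⟩
  rw [ramseyDeg_def]
  refine le_antisymm (sInf_le ⟨_, Nat.sInf_mem hne, rfl⟩) (le_sInf ?_)
  rintro n ⟨m, hm, rfl⟩
  show ((sInf (RSet C A) : ℕ) : ℕ∞) ≤ (m : ℕ∞)
  exact_mod_cast Nat.sInf_le hm

lemma bad_coloring {X : C} {p : ℕ} (hp : 1 ≤ p) (h : (p : ℕ∞) ≤ ramseyDeg C X) :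
    ∃ (k : ℕ) (B : C), 2 ≤ k ∧ ∀ Z : C, ∃ χ : (X ⟶ Z) → Fin k, ∀ v : B ⟶ Z,
      p ≤ (Set.range fun f : X ⟶ B => χ (f ≫ v)).ncard := by
  rcases eq_or_lt_of_le hp with h1 | h2
  · refine ⟨2, X, le_refl 2, fun Z => ⟨fun _ => 0, fun v => ?_⟩⟩
    rw [← h1]
    exact (Set.ncard_pos (Set.toFinite _)).2 ⟨_, ⟨𝟙 X, rfl⟩⟩
  · have hnot : p - 1 ∉ RSet C X := by
      intro hmem
      have := ramseyDeg_le hmem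
      have hlt : ((p - 1 : ℕ) : ℕ∞) < (p : ℕ∞) := by exact_mod_cast by omega
      exact absurd (h.trans this) (not_le.mpr hlt)
    unfold RSet at hnot
    rw [Set.mem_setOf_eq] at hnot
    push_neg at hnot
    obtain ⟨k, hk, B, hB⟩ := hnot (by omega)
    refine ⟨k, B, hk, fun Z => ?_⟩
    have hZ := hB Z
    unfold RamseyArrow at hZ
    push_neg at hZ
    obtain ⟨χ, hχ⟩ := hZ
    exact ⟨χ, fun v => by have := hχ v; omega⟩



lemma dir_cone (hdir : ∀ X Y : D, ∃ Z : D, Nonempty (X ⟶ Z) ∧ Nonempty (Y ⟶ Z)) :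
    ∀ (m : ℕ) (g : Fin (m + 1) → D), ∃ T : D, ∀ i, Nonempty (g i ⟶ T) := by
  intro m
  induction m with
  | zero =>
    intro g
    exact ⟨g 0, fun i => ⟨eqToHom (congrArg g (Fin.fin_one_eq_zero i ▸ rfl))⟩⟩
  | succ m ih =>
    intro g
    obtain ⟨T', hT'⟩ := ih (g ∘ Fin.succ)
    obtain ⟨T, ⟨f0⟩, ⟨fT⟩⟩ := hdir (g 0) T'
    refine ⟨T, fun i => ?_⟩
    refine Fin.cases ⟨f0⟩ (fun j => ⟨(hT' j).some ≫ fT⟩) i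

lemma chainLemma (k : ℕ) (t : D → ℕ) :
    ∀ (L : List D), (∀ X ∈ L, ∀ B : D, ∃ Z : D, RamseyArrow D X B Z k (t X)) →
    ∀ Z₀ : D, ∃ Z : D, ∀ χ : ∀ X : D, (X ⟶ Z) → Fin k, ∃ v : Z₀ ⟶ Z,
      ∀ X ∈ L, (Set.range fun f : X ⟶ Z₀ => χ X (f ≫ v)).ncard ≤ t X := by
  intro L
  induction L with
  | nil => exact fun _ Z₀ => ⟨Z₀, fun χ => ⟨𝟙 Z₀, fun X hX => absurd hX List.not_mem_nil⟩⟩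
  | cons X L ih =>
    intro hL Z₀
    obtain ⟨Z₁, hR⟩ := hL X List.mem_cons_self Z₀
    obtain ⟨Z, hZ⟩ := ih (fun Y hY => hL Y (List.mem_cons_of_mem X hY)) Z₁
    refine ⟨Z, fun χ => ?_⟩
    obtain ⟨v₁, hv₁⟩ := hZ χ
    obtain ⟨w, hw⟩ := hR (fun f => χ X (f ≫ v₁))
    refine ⟨w ≫ v₁, fun Y hY => ?_⟩
    rcases List.mem_cons.1 hY with rfl | hY'
    · refine le_trans (le_of_eq ?_) hw
      congr 1
      ext c
      constructor
      · rintro ⟨f, rfl⟩; exact ⟨f, by simp⟩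
      · rintro ⟨f, rfl⟩; exact ⟨f, by simp⟩
    · refine le_trans (Set.ncard_le_ncard ?_ (Set.toFinite _)) (hv₁ Y hY')
      rintro c ⟨f, rfl⟩
      exact ⟨f ≫ w, by simp⟩

/-- union over a list -/
def LU {k : ℕ} (S : D → Set (Fin k)) : List D → Set (Fin k)
  | [] => ∅
  | X :: L => S X ∪ LU S L

lemma ncard_LU_le {k : ℕ} (S : D → Set (Fin k)) (t : D → ℕ) :
    ∀ L : List D, (∀ X ∈ L, (S X).ncard ≤ t X) → (LU S L).ncard ≤ (L.map t).sum := by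
  intro L
  induction L with
  | nil => intro _; simp [LU]
  | cons X L ih =>
    intro h
    have h1 : (LU S (X :: L)).ncard ≤ (S X).ncard + (LU S L).ncard :=
      Set.ncard_union_le _ _
    have h2 := ih fun Y hY => h Y (List.mem_cons_of_mem X hY)
    have h3 := h X List.mem_cons_self
    simpa using le_trans h1 (by omega)



lemma mem_LU {k : ℕ} (S : D → Set (Fin k)) {L : List D} {X : D} (hX : X ∈ L) {c : Fin k}
    (hc : c ∈ S X) : c ∈ LU S L := by
  induction L with
  | nil => exact absurd hX List.not_mem_nil
  | cons Y L ih =>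
    rcases List.mem_cons.1 hX with rfl | h
    · exact Or.inl hc
    · exact Or.inr (ih h)

lemma upperList (U : D ⥤ C) (hsurj : ObjSurjective U) (hur : HasUniqueRestrictions U)
    (A : C) (L : List D) (hLne : L ≠ []) (hcover : ∀ X : D, U.obj X = A → X ∈ L)
    (t : D → ℕ) (ht1 : ∀ X ∈ L, 1 ≤ t X) (htR : ∀ X ∈ L, t X ∈ RSet D X) :
    (L.map t).sum ∈ RSet C A := by
  constructor
  · rcases L with - | ⟨X, L'⟩
    · exact absurd rfl hLne
    · have := ht1 X List.mem_cons_self; simp only [List.map_cons, List.sum_cons]; omega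
  · intro k hk B
    obtain ⟨B₀, hB₀⟩ := hsurj B
    obtain ⟨Zd, hZd⟩ := chainLemma k t L (fun X hX B' => (htR X hX).2 k hk B') B₀
    refine ⟨U.obj Zd, fun χ => ?_⟩
    classical
    have hk0 : 0 < k := by omega
    set χ' : ∀ X : D, (X ⟶ Zd) → Fin k := fun X g =>
      if h : U.obj X = A then χ (eqToHom h.symm ≫ U.map g) else ⟨0, hk0⟩ with hχ'
    obtain ⟨v, hv⟩ := hZd χ'
    refine ⟨eqToHom hB₀.symm ≫ U.map v, ?_⟩
    set S : D → Set (Fin k) := fun X => Set.range fun f : X ⟶ B₀ => χ' X (f ≫ v) with hS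
    have hsub : (Set.range fun f : A ⟶ B => χ (f ≫ (eqToHom hB₀.symm ≫ U.map v))) ⊆ LU S L := by
      rintro c ⟨f, rfl⟩
      obtain ⟨Xh, ⟨fh, hfh⟩, -⟩ := hur B₀ A (f ≫ eqToHom hB₀.symm)
      refine mem_LU S (hcover Xh.1 Xh.2) ⟨fh, ?_⟩
      simp only [hχ', dif_pos Xh.2]
      rw [U.map_comp, hfh]
      simp
    exact le_trans (Set.ncard_le_ncard hsub (Set.toFinite _))
      (ncard_LU_le S t L (fun X hX => hv X hX))



lemma lowerBound (U : D ⥤ C)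
    (hdir : ∀ X Y : D, ∃ Z : D, Nonempty (X ⟶ Z) ∧ Nonempty (Y ⟶ Z))
    (hsurj : ObjSurjective U) (hinj : HomInjective U)
    (hur : HasUniqueRestrictions U) (hexp : ExpansionProperty U) (A : C)
    (n : ℕ) (hn : n ∈ RSet C A)
    (m : ℕ) (F : Fin m → {Z : D // U.obj Z = A}) (hinjF : Function.Injective F)
    (p : Fin m → ℕ) (hp1 : ∀ i, 1 ≤ p i) (hple : ∀ i, (p i : ℕ∞) ≤ ramseyDeg D (F i).1) :
    ∑ i, p i ≤ n := by
  classical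
  rcases m with - | m
  · simp
  -- bad colorings
  choose k B hk hbad using fun i => bad_coloring (hp1 i) (hple i)
  -- cone over the B i
  obtain ⟨T, hb⟩ := dir_cone hdir m B
  -- expansion property target
  obtain ⟨B', hB'⟩ := hexp (U.obj T)
  -- color space
  set κ := Option ((i : Fin (m + 1)) × Fin (k i)) with hκ
  haveI : Nontrivial κ := ⟨none, some ⟨0, ⟨0, by have := hk 0; omega⟩⟩, by simp⟩
  set K := Fintype.card κ with hKdef
  have hK : 2 ≤ K := Fintype.one_lt_card
  set eκ : κ ≃ Fin K := Fintype.equivFin κ with heκ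
  obtain ⟨Z, hZR⟩ := hn.2 K hK B'
  obtain ⟨Zh, hZh⟩ := hsurj Z
  choose χb hχb using fun i => hbad i Zh
  -- the coloring
  have hres : ∀ e : A ⟶ Z, ∃ X : {Z' : D // U.obj Z' = A},
      InHom U X.1 Zh X.2 (e ≫ eqToHom hZh.symm) := fun e => (hur Zh A _).exists
  set χ : (A ⟶ Z) → Fin K := fun e =>
    eκ (if h : ∃ i, F i = (hres e).choose then
      some ⟨h.choose, χb h.choose
        (eqToHom (congrArg Subtype.val h.choose_spec) ≫ ((hres e).choose_spec).choose)⟩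
    else none) with hχ
  -- key computation
  have hkey : ∀ (i : Fin (m + 1)) (g : (F i).1 ⟶ Zh) (e : A ⟶ Z),
      U.map g = eqToHom (F i).2 ≫ e ≫ eqToHom hZh.symm → χ e = eκ (some ⟨i, χb i g⟩) := by
    intro i g e hg
    have hIn : InHom U (F i).1 Zh (F i).2 (e ≫ eqToHom hZh.symm) := ⟨g, hg⟩
    obtain ⟨Xu, hXu, huniq⟩ := hur Zh A (e ≫ eqToHom hZh.symm)
    have h1 : (hres e).choose = Xu := huniq _ (hres e).choose_spec
    have h2 : F i = (hres e).choose := (huniq _ hIn).trans h1.symm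
    have hex : ∃ i', F i' = (hres e).choose := ⟨i, h2⟩
    have hgen : ∀ (j : Fin (m + 1)) (hj : F j = (hres e).choose),
        (some ⟨j, χb j (eqToHom (congrArg Subtype.val hj) ≫ ((hres e).choose_spec).choose)⟩ : κ)
          = some ⟨i, χb i g⟩ := by
      intro j hj
      have hji : j = i := hinjF (hj.trans h2.symm)
      subst hji
      have hlift : eqToHom (congrArg Subtype.val hj) ≫ ((hres e).choose_spec).choose = g := by
        apply hinj
        rw [U.map_comp, eqToHom_map, ((hres e).choose_spec).choose_spec, hg]
        rw [eqToHom_trans_assoc]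
      rw [hlift]
    simp only [hχ, dif_pos hex]
    exact congrArg eκ (hgen hex.choose hex.choose_spec)
  -- apply Ramsey in C
  obtain ⟨w, hw⟩ := hZR χ
  -- restriction of w
  obtain ⟨Bh, ⟨wh, hwh⟩, -⟩ := hur Zh B' (w ≫ eqToHom hZh.symm)
  obtain ⟨u⟩ := hB' T Bh.1 rfl Bh.2
  set d : ∀ i, B i ⟶ Zh := fun i => (hb i).some ≫ u ≫ wh with hd
  -- the per-i color sets
  set Ti : ∀ i : Fin (m + 1), Finset (Fin (k i)) := fun i =>
    (Set.range fun f : (F i).1 ⟶ B i => χb i (f ≫ d i)).toFinset with hTi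
  have hTicard : ∀ i, p i ≤ (Ti i).card := by
    intro i
    rw [hTi]
    rw [← Set.ncard_eq_toFinset_card']
    exact hχb i (d i)
  -- the injections into Fin K
  set gi : ∀ i : Fin (m + 1), Fin (k i) → Fin K := fun i c => eκ (some ⟨i, c⟩) with hgi
  have hgiinj : ∀ i, Function.Injective (gi i) := by
    intro i c c' hcc
    have h2 := Option.some_injective _ (eκ.injective hcc)
    exact eq_of_heq (Sigma.mk.inj_iff.1 h2).2
  -- elements of the images are in the Ramsey range
  have hmem : ∀ (i : Fin (m + 1)) (c : Fin (k i)), c ∈ Ti i →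
      gi i c ∈ (Set.range fun f : A ⟶ B' => χ (f ≫ w)) := by
    intro i c hc
    rw [hTi, Set.mem_toFinset] at hc
    obtain ⟨f, rfl⟩ := hc
    set F₀ : (F i).1 ⟶ Bh.1 := f ≫ (hb i).some ≫ u with hF₀
    refine ⟨eqToHom (F i).2.symm ≫ U.map F₀ ≫ eqToHom Bh.2, ?_⟩
    show χ ((eqToHom (F i).2.symm ≫ U.map F₀ ≫ eqToHom Bh.2) ≫ w) = gi i (χb i (f ≫ d i))
    have heq := hkey i (F₀ ≫ wh) ((eqToHom (F i).2.symm ≫ U.map F₀ ≫ eqToHom Bh.2) ≫ w)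
      (by rw [U.map_comp, hwh]; simp)
    rw [heq, hgi]
    congr 2
    rw [hF₀]
    simp [hd]
  -- counting
  set G : Finset (Fin K) := Finset.univ.biUnion fun i => (Ti i).image (gi i) with hG
  have hdisj : ∀ i ∈ (Finset.univ : Finset (Fin (m + 1))), ∀ j ∈ Finset.univ, i ≠ j →
      Disjoint ((Ti i).image (gi i)) ((Ti j).image (gi j)) := by
    rintro i - j - hij
    rw [Finset.disjoint_left]
    rintro a ha hb'
    obtain ⟨c, -, rfl⟩ := Finset.mem_image.1 ha
    obtain ⟨c', -, hcc⟩ := Finset.mem_image.1 hb'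
    apply hij
    have h2 := Option.some_injective _ (eκ.injective hcc)
    exact ((Sigma.mk.inj_iff.1 h2).1).symm
  have hGcard : ∑ i, p i ≤ G.card := by
    rw [hG, Finset.card_biUnion hdisj]
    refine Finset.sum_le_sum fun i _ => ?_
    rw [Finset.card_image_of_injective _ (hgiinj i)]
    exact hTicard i
  have hGsub : G ⊆ (Set.range fun f : A ⟶ B' => χ (f ≫ w)).toFinset := by
    intro a ha
    rw [hG, Finset.mem_biUnion] at ha
    obtain ⟨i, -, ha⟩ := ha
    obtain ⟨c, hc, rfl⟩ := Finset.mem_image.1 ha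
    rw [Set.mem_toFinset]
    exact hmem i c hc
  calc ∑ i, p i ≤ G.card := hGcard
    _ ≤ (Set.range fun f : A ⟶ B' => χ (f ≫ w)).toFinset.card := Finset.card_le_card hGsub
    _ = (Set.range fun f : A ⟶ B' => χ (f ≫ w)).ncard := (Set.ncard_eq_toFinset_card' _).symm
    _ ≤ n := hw


end Stmt19Aux

theorem stmt19 (U : D ⥤ C)
    (hmono : ∀ {X Y : C} (f : X ⟶ Y), Mono f)
    (hdir : ∀ X Y : D, ∃ Z : D, Nonempty (X ⟶ Z) ∧ Nonempty (Y ⟶ Z))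
    (hsurj : ObjSurjective U) (hinj : HomInjective U)
    (hreas : Reasonable U) (hur : HasUniqueRestrictions U)
    (hexp : ExpansionProperty U) (A : C) :
    ramseyDeg C A = ∑' X : {Z : D // U.obj Z = A}, ramseyDeg D X.1 ∧
    (ramseyDeg C A ≠ ⊤ ↔
      ({Z : D | U.obj Z = A}.Finite ∧
        ∀ X : D, U.obj X = A → ramseyDeg D X ≠ ⊤)) := by
  classical
  have hFne : Nonempty {Z : D // U.obj Z = A} := by
    obtain ⟨X, hX⟩ := hsurj A; exact ⟨⟨X, hX⟩⟩
  have keyUpper : {Z : D | U.obj Z = A}.Finite →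
      (∀ X : {Z : D // U.obj Z = A}, ramseyDeg D X.1 ≠ ⊤) →
      ramseyDeg C A ≤ ∑' X : {Z : D // U.obj Z = A}, ramseyDeg D X.1 := by
    intro hfin hne
    haveI : Finite {Z : D // U.obj Z = A} := Set.finite_coe_iff.mpr hfin
    haveI := Fintype.ofFinite {Z : D // U.obj Z = A}
    choose t ht htR using fun X : {Z : D // U.obj Z = A} =>
      Stmt19Aux.ramseyDeg_attained (hne X)
    have htsum : ∑' X : {Z : D // U.obj Z = A}, ramseyDeg D X.1
        = ((∑ X : {Z : D // U.obj Z = A}, t X : ℕ) : ℕ∞) := by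
      rw [tsum_fintype, Nat.cast_sum]
      exact Finset.sum_congr rfl fun X _ => ht X
    set L : List D :=
      (Finset.univ : Finset {Z : D // U.obj Z = A}).toList.map Subtype.val with hL
    set t' : D → ℕ := fun X => if h : U.obj X = A then t ⟨X, h⟩ else 1 with ht'
    have hLt' : (L.map t').sum = ∑ X : {Z : D // U.obj Z = A}, t X := by
      rw [hL, List.map_map]
      have heq : (t' ∘ Subtype.val) = fun X : {Z : D // U.obj Z = A} => t X := by
        funext X
        show t' X.1 = t X
        rw [ht']
        show (if h : U.obj X.1 = A then t ⟨X.1, h⟩ else 1) = t X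
        rw [dif_pos X.2]
      rw [heq, Finset.sum_map_toList]
    have hLne : L ≠ [] := by
      obtain ⟨X⟩ := hFne
      intro hcon
      have hXL : X.1 ∈ L := by
        rw [hL]
        exact List.mem_map_of_mem (Finset.mem_toList.2 (Finset.mem_univ X))
      rw [hcon] at hXL
      exact List.not_mem_nil hXL
    have hcover : ∀ X : D, U.obj X = A → X ∈ L := fun X hX => by
      rw [hL]
      exact List.mem_map_of_mem (f := Subtype.val) (Finset.mem_toList.2 (Finset.mem_univ (⟨X, hX⟩ : {Z : D // U.obj Z = A})))
    have hmemL : ∀ X ∈ L, U.obj X = A := by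
      intro X hX
      rw [hL] at hX
      obtain ⟨Y, -, rfl⟩ := List.mem_map.1 hX
      exact Y.2
    have ht'R : ∀ X ∈ L, t' X ∈ Stmt19Aux.RSet D X := by
      intro X hX
      have h := hmemL X hX
      rw [ht']
      show (if h : U.obj X = A then t ⟨X, h⟩ else 1) ∈ Stmt19Aux.RSet D X
      rw [dif_pos h]
      exact htR ⟨X, h⟩
    have ht'1 : ∀ X ∈ L, 1 ≤ t' X := fun X hX => (ht'R X hX).1
    have hmem := Stmt19Aux.upperList U hsurj hur A L hLne hcover t' ht'1 ht'R
    have hle := Stmt19Aux.ramseyDeg_le hmem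
    rw [hLt'] at hle
    rw [htsum]
    exact hle
  have keyLower : ∀ n : ℕ, n ∈ Stmt19Aux.RSet C A →
      {Z : D | U.obj Z = A}.Finite ∧
      (∑' X : {Z : D // U.obj Z = A}, ramseyDeg D X.1) ≤ (n : ℕ∞) := by
    intro n hn
    have hfin : {Z : D | U.obj Z = A}.Finite := by
      by_contra hinf
      haveI : Infinite {Z : D // U.obj Z = A} := Set.infinite_coe_iff.mpr hinf
      obtain ⟨s, hs⟩ := Infinite.exists_subset_card_eq {Z : D // U.obj Z = A} (n + 1)
      set e := s.equivFin with he
      set F : Fin (n + 1) → {Z : D // U.obj Z = A} :=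
        fun i => (e.symm (Fin.cast hs.symm i) : {Z : D // U.obj Z = A}) with hF
      have hinjF : Function.Injective F := by
        intro i j hij
        have h1 := e.symm.injective (Subtype.coe_injective hij)
        exact Fin.val_injective (by simpa using congrArg Fin.val h1)
      have hb := Stmt19Aux.lowerBound U hdir hsurj hinj hur hexp A n hn (n + 1) F hinjF
        (fun _ => 1) (fun _ => le_refl 1)
        (fun i => by simpa using Stmt19Aux.one_le_ramseyDeg (C := D) (F i).1)
      simp at hb
    refine ⟨hfin, ?_⟩
    haveI : Finite {Z : D // U.obj Z = A} := Set.finite_coe_iff.mpr hfin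
    haveI := Fintype.ofFinite {Z : D // U.obj Z = A}
    set m := Fintype.card {Z : D // U.obj Z = A} with hm
    set e : Fin m ≃ {Z : D // U.obj Z = A} := (Fintype.equivFin _).symm with he
    have hterm : ∀ X : {Z : D // U.obj Z = A}, ramseyDeg D X.1 ≠ ⊤ := by
      intro X hX
      set p : Fin m → ℕ := fun i => if e i = X then n + 1 else 1 with hp
      have h1 : ∀ i, 1 ≤ p i := by
        intro i
        by_cases h : e i = X <;> simp [hp, h]
      have h2 : ∀ i, (p i : ℕ∞) ≤ ramseyDeg D (e i).1 := by
        intro i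
        by_cases h : e i = X
        · rw [hp]
          show ((if e i = X then n + 1 else 1 : ℕ) : ℕ∞) ≤ ramseyDeg D (e i).1
          rw [if_pos h, h, hX]
          exact le_top
        · rw [hp]
          show ((if e i = X then n + 1 else 1 : ℕ) : ℕ∞) ≤ ramseyDeg D (e i).1
          rw [if_neg h]
          simpa using Stmt19Aux.one_le_ramseyDeg (C := D) (e i).1
      have hb := Stmt19Aux.lowerBound U hdir hsurj hinj hur hexp A n hn m e
        e.injective p h1 h2
      have hpex : p (e.symm X) = n + 1 := by
        rw [hp]
        show (if e (e.symm X) = X then n + 1 else 1) = n + 1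
        rw [if_pos (e.apply_symm_apply X)]
      have hbig : n + 1 ≤ ∑ i, p i := by
        calc n + 1 = p (e.symm X) := hpex.symm
          _ ≤ ∑ i, p i := Finset.single_le_sum (fun _ _ => Nat.zero_le _) (Finset.mem_univ _)
      omega
    choose t ht htR using fun X => Stmt19Aux.ramseyDeg_attained (hterm X)
    have hb := Stmt19Aux.lowerBound U hdir hsurj hinj hur hexp A n hn m e e.injective
      (fun i => t (e i)) (fun i => (htR (e i)).1) (fun i => le_of_eq (ht (e i)).symm)
    rw [tsum_fintype]
    have hsum : ∑ X : {Z : D // U.obj Z = A}, ramseyDeg D X.1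
        = ((∑ X : {Z : D // U.obj Z = A}, t X : ℕ) : ℕ∞) := by
      rw [Nat.cast_sum]
      exact Finset.sum_congr rfl fun X _ => ht X
    rw [hsum]
    have hre : ∑ X : {Z : D // U.obj Z = A}, t X = ∑ i, t (e i) :=
      (Equiv.sum_comp e (fun X => t X)).symm
    rw [hre]
    exact_mod_cast hb
  have hmain : ramseyDeg C A = ∑' X : {Z : D // U.obj Z = A}, ramseyDeg D X.1 := by
    by_cases h : ramseyDeg C A = ⊤
    · rw [h]
      by_contra hne
      have hne' : (∑' X : {Z : D // U.obj Z = A}, ramseyDeg D X.1) ≠ ⊤ := fun hcon => hne (by rw [hcon])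
      have hfin : {Z : D | U.obj Z = A}.Finite := by
        by_contra hinf
        haveI : Infinite {Z : D // U.obj Z = A} := Set.infinite_coe_iff.mpr hinf
        exact hne' (Stmt19Aux.enat_tsum_top _ fun X => Stmt19Aux.one_le_ramseyDeg (C := D) X.1)
      haveI : Finite {Z : D // U.obj Z = A} := Set.finite_coe_iff.mpr hfin
      haveI := Fintype.ofFinite {Z : D // U.obj Z = A}
      have hterm : ∀ X : {Z : D // U.obj Z = A}, ramseyDeg D X.1 ≠ ⊤ := by
        intro X hX
        apply hne'
        rw [tsum_fintype]
        refine top_le_iff.mp ?_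
        calc (⊤ : ℕ∞) = ramseyDeg D X.1 := hX.symm
          _ ≤ ∑ X' : {Z : D // U.obj Z = A}, ramseyDeg D X'.1 :=
            Finset.single_le_sum (f := fun X' : {Z : D // U.obj Z = A} => ramseyDeg D X'.1)
              (fun _ _ => zero_le) (Finset.mem_univ X)
      have hub := keyUpper hfin hterm
      rw [h] at hub
      exact hne (top_le_iff.mp hub).symm
    · obtain ⟨nn, hdeg, hmem⟩ := Stmt19Aux.ramseyDeg_attained h
      obtain ⟨hfin, hle⟩ := keyLower nn hmem
      haveI : Finite {Z : D // U.obj Z = A} := Set.finite_coe_iff.mpr hfin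
      haveI := Fintype.ofFinite {Z : D // U.obj Z = A}
      have hterm : ∀ X : {Z : D // U.obj Z = A}, ramseyDeg D X.1 ≠ ⊤ := by
        intro X hX
        have h1 : (⊤ : ℕ∞) ≤ ∑' X' : {Z : D // U.obj Z = A}, ramseyDeg D X'.1 := by
          rw [tsum_fintype]
          calc (⊤ : ℕ∞) = ramseyDeg D X.1 := hX.symm
            _ ≤ ∑ X' : {Z : D // U.obj Z = A}, ramseyDeg D X'.1 :=
              Finset.single_le_sum (f := fun X' : {Z : D // U.obj Z = A} => ramseyDeg D X'.1)
                (fun _ _ => zero_le) (Finset.mem_univ X)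
        have h2 := h1.trans hle
        simp at h2
      have hge := keyUpper hfin hterm
      exact le_antisymm hge (hle.trans_eq hdeg.symm)
  refine ⟨hmain, ?_, ?_⟩
  · intro h
    obtain ⟨nn, hdeg, hmem⟩ := Stmt19Aux.ramseyDeg_attained h
    obtain ⟨hfin, hle⟩ := keyLower nn hmem
    refine ⟨hfin, fun X hX => ?_⟩
    haveI : Finite {Z : D // U.obj Z = A} := Set.finite_coe_iff.mpr hfin
    haveI := Fintype.ofFinite {Z : D // U.obj Z = A}
    intro hcon
    have h1 : (⊤ : ℕ∞) ≤ ∑' X' : {Z : D // U.obj Z = A}, ramseyDeg D X'.1 := by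
      rw [tsum_fintype]
      calc (⊤ : ℕ∞) = ramseyDeg D X := hcon.symm
        _ ≤ ∑ X' : {Z : D // U.obj Z = A}, ramseyDeg D X'.1 :=
          Finset.single_le_sum (f := fun X' : {Z : D // U.obj Z = A} => ramseyDeg D X'.1)
            (fun _ _ => zero_le) (Finset.mem_univ ⟨X, hX⟩)
    have h2 := h1.trans hle
    simp at h2
  · rintro ⟨hfin, hne⟩
    have hterm : ∀ X : {Z : D // U.obj Z = A}, ramseyDeg D X.1 ≠ ⊤ := fun X => hne X.1 X.2
    have hub := keyUpper hfin hterm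
    haveI : Finite {Z : D // U.obj Z = A} := Set.finite_coe_iff.mpr hfin
    haveI := Fintype.ofFinite {Z : D // U.obj Z = A}
    choose t ht htR using fun X => Stmt19Aux.ramseyDeg_attained (hterm X)
    intro hcon
    rw [hcon] at hub
    have htop := top_le_iff.mp hub
    rw [tsum_fintype] at htop
    have hsum : ∑ X : {Z : D // U.obj Z = A}, ramseyDeg D X.1
        = ((∑ X : {Z : D // U.obj Z = A}, t X : ℕ) : ℕ∞) := by
      rw [Nat.cast_sum]
      exact Finset.sum_congr rfl fun X _ => ht X
    rw [hsum] at htop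
    exact ENat.coe_ne_top _ htop
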